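/- Let f : ℝ^n → ℝ ∪ {+∞} be proper, lower semicontinuous, coercive, and uniformly quasiconvex with modulus φ on a closed convex set C ⊆ dom f, and suppose φ(t) ≥ ρ t² for all t ≥ 0, where ρ > 0. Let {x^k}_{k≥0} be a HiPPA sequence for f on C with order p = 2 and parameters γ_k ∈ (γ_min, γ_max), and let x̄ be the unique global minimizer of f on C. Then the convergence is linear: for every k ≥ 0, ‖x̄ − x^{k+1}‖ ≤ (1/(1 + γ_min·ρ))·‖x̄ − x^k‖, and 1/(1 + γ_min·ρ) < 1. -/

import Mathlib

set_option maxHeartbeats 1000000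

noncomputable section

open Set Filter
open RealInnerProductSpace

/-- `φ : [0,∞) → [0,∞]` is a modulus: increasing and vanishing only at `0`. -/
def IsModulus (φ : ℝ → EReal) : Prop :=
  (∀ ⦃s t : ℝ⦄, 0 ≤ s → s ≤ t → φ s ≤ φ t) ∧ φ 0 = 0 ∧ (∀ t : ℝ, 0 < t → 0 < φ t)

/-- `f` is uniformly quasiconvex on `C` with modulus `φ`. -/
def UnifQuasiconvexOn {E : Type*} [NormedAddCommGroup E] [NormedSpace ℝ E]
    (C : Set E) (φ : ℝ → EReal) (f : E → EReal) : Prop :=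
  ∀ ⦃x⦄, x ∈ C → ∀ ⦃y⦄, y ∈ C → ∀ ⦃l : ℝ⦄, l ∈ Set.Icc (0 : ℝ) 1 →
    f (l • x + (1 - l) • y) + ((l * (1 - l) : ℝ) : EReal) * φ ‖x - y‖ ≤ max (f x) (f y)

/-- `f(x) → +∞` as `‖x‖ → +∞`. -/
def Coercive {E : Type*} [NormedAddCommGroup E] (f : E → EReal) : Prop :=
  ∀ M : ℝ, ∃ R : ℝ, ∀ x : E, R ≤ ‖x‖ → (M : EReal) < f x

/-- The high-order proximal set `prox_{f,γ}^p(C, x) = argmin_{y ∈ C} (f(y) + (1/(pγ))‖x − y‖^p)`. -/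
def HOProx {E : Type*} [NormedAddCommGroup E]
    (f : E → EReal) (C : Set E) (p γ : ℝ) (x : E) : Set E :=
  {y | y ∈ C ∧ ∀ z ∈ C,
    f y + ((1 / (p * γ) * ‖x - y‖ ^ p : ℝ) : EReal)
      ≤ f z + ((1 / (p * γ) * ‖x - z‖ ^ p : ℝ) : EReal)}

/-- **Linear convergence for `p = 2`.**  If `φ(t) ≥ ρt²` for all `t ≥ 0`
with `ρ > 0`, then for a HiPPA sequence of order `p = 2` and the unique global minimizer
`x̄`, `‖x̄ − x^{k+1}‖ ≤ (1/(1 + γ_min·ρ))·‖x̄ − x^k‖` for all `k`, and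
`1/(1 + γ_min·ρ) < 1`. -/
theorem statement_17 (n : ℕ) (f : EuclideanSpace ℝ (Fin n) → EReal)
    (hproper : ∃ x, f x ≠ ⊤) (hbot : ∀ x, f x ≠ ⊥)
    (hlsc : LowerSemicontinuous f) (hcoer : Coercive f)
    (C : Set (EuclideanSpace ℝ (Fin n)))
    (hCclosed : IsClosed C) (hCconv : Convex ℝ C)
    (hdom : ∀ x ∈ C, f x ≠ ⊤)
    (φ : ℝ → EReal) (hφ : IsModulus φ)
    (hquasi : UnifQuasiconvexOn C φ f)
    (ρ : ℝ) (hρ : 0 < ρ)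
    (hlb : ∀ t : ℝ, 0 ≤ t → ((ρ * t ^ 2 : ℝ) : EReal) ≤ φ t)
    (γmin γmax : ℝ) (hγmin : 0 < γmin) (hγ : γmin < γmax)
    (x : ℕ → EuclideanSpace ℝ (Fin n)) (γ : ℕ → ℝ)
    (hx0 : x 0 ∈ C)
    (hγk : ∀ k, γ k ∈ Set.Ioo γmin γmax)
    (hstep : ∀ k, x (k + 1) ∈ HOProx f C 2 (γ k) (x k))
    (xb : EuclideanSpace ℝ (Fin n)) (hxbC : xb ∈ C)
    (hxbmin : ∀ y ∈ C, f xb ≤ f y)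
    (hxbuniq : ∀ z ∈ C, (∀ y ∈ C, f z ≤ f y) → z = xb) :
    (1 / (1 + γmin * ρ) < 1) ∧
    ∀ k : ℕ, ‖xb - x (k + 1)‖ ≤ (1 / (1 + γmin * ρ)) * ‖xb - x k‖ := by
  have hApos : (0:ℝ) < 1 + γmin * ρ := by nlinarith
  have hA1 : (1:ℝ) < 1 + γmin * ρ := by nlinarith
  constructor
  · rw [div_lt_one hApos]; exact hA1
  intro k
  obtain ⟨hyC, hprox⟩ := hstep k
  obtain ⟨hg1, hg2⟩ := hγk k
  set z := x k with hz
  set y := x (k + 1) with hy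
  set g := γ k with hgdef
  have hgpos : (0:ℝ) < g := hγmin.trans hg1
  set d := ‖xb - y‖ with hd
  have hdnn : (0:ℝ) ≤ d := norm_nonneg _
  rcases hdnn.eq_or_lt with h0 | hdpos
  · rw [← h0]
    exact mul_nonneg (le_of_lt (div_pos one_pos hApos)) (norm_nonneg _)
  have hfin : ∀ w ∈ C, ((f w).toReal : EReal) = f w := fun w hw =>
    EReal.coe_toReal (hdom w hw) (hbot w)
  have hrpow : ∀ t : ℝ, t ^ (2:ℝ) = t ^ 2 := fun t => by
    rw [show (2:ℝ) = ((2:ℕ):ℝ) by norm_num, Real.rpow_natCast]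
  set c : ℝ := 1 / (2 * g) with hc
  have hcpos : 0 < c := by rw [hc]; positivity
  have prox_real : ∀ w ∈ C,
      (f y).toReal + c * ‖z - y‖ ^ 2 ≤ (f w).toReal + c * ‖z - w‖ ^ 2 := by
    intro w hw
    have h := hprox w hw
    rw [← hfin y hyC, ← hfin w hw, ← EReal.coe_add, ← EReal.coe_add,
      EReal.coe_le_coe_iff, hrpow, hrpow] at h
    exact h
  have quasi_real : ∀ l : ℝ, 0 < l → l ≤ 1 →
      (f (l • xb + (1 - l) • y)).toReal + l * (1 - l) * (ρ * d ^ 2) ≤ (f y).toReal := by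
    intro l hl0 hl1
    have hwC : l • xb + (1 - l) • y ∈ C :=
      hCconv hxbC hyC hl0.le (by linarith) (by ring)
    have hq := hquasi hxbC hyC (Set.mem_Icc.mpr ⟨hl0.le, hl1⟩)
    rw [max_eq_right (hxbmin y hyC)] at hq
    have hmul : ((l * (1 - l) * (ρ * d ^ 2) : ℝ) : EReal)
        ≤ ((l * (1 - l) : ℝ) : EReal) * φ d := by
      calc ((l * (1 - l) * (ρ * d ^ 2) : ℝ) : EReal)
          = ((l * (1 - l) : ℝ) : EReal) * ((ρ * d ^ 2 : ℝ) : EReal) := by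
            rw [← EReal.coe_mul]
        _ ≤ ((l * (1 - l) : ℝ) : EReal) * φ d := by
            apply mul_le_mul_of_nonneg_left (hlb d hdnn)
            exact_mod_cast mul_nonneg hl0.le (by linarith : (0:ℝ) ≤ 1 - l)
    have h2 : f (l • xb + (1 - l) • y) + ((l * (1 - l) * (ρ * d ^ 2) : ℝ) : EReal) ≤ f y :=
      le_trans (add_le_add_right hmul _) hq
    rw [← hfin _ hwC, ← hfin y hyC, ← EReal.coe_add, EReal.coe_le_coe_iff] at h2
    exact h2
  set u := z - y with hu
  set v := xb - y with hv
  clear_value z y g d c u v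
  have key : ∀ l : ℝ, 0 < l → l ≤ 1 →
      (1 - l) * (ρ * d ^ 2) ≤ -2 * c * ⟪u, v⟫ + c * l * d ^ 2 := by
    intro l hl0 hl1
    have hwC : l • xb + (1 - l) • y ∈ C :=
      hCconv hxbC hyC hl0.le (by linarith) (by ring)
    have h1 := quasi_real l hl0 hl1
    have h2 := prox_real _ hwC
    have hexp : ‖z - (l • xb + (1 - l) • y)‖ ^ 2
        = ‖u‖ ^ 2 - 2 * l * ⟪u, v⟫ + l ^ 2 * d ^ 2 := by
      have hw : z - (l • xb + (1 - l) • y) = u - l • v := by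
        rw [hu, hv]; module
      rw [hw, norm_sub_sq_real, real_inner_smul_right, norm_smul, hd,
        Real.norm_eq_abs, mul_pow, sq_abs]
      ring
    rw [hexp] at h2
    have h3 : l * ((1 - l) * (ρ * d ^ 2)) ≤ l * (-2 * c * ⟪u, v⟫ + c * l * d ^ 2) := by
      nlinarith [h1, h2]
    exact le_of_mul_le_mul_left h3 hl0
  have hkey2 : ρ * d ^ 2 ≤ -2 * c * ⟪u, v⟫ := by
    refine le_of_forall_pos_le_add fun ε hε => ?_
    set D : ℝ := |c * d ^ 2| + ρ * d ^ 2 + 1 with hD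
    have hDpos : 0 < D := by
      have := abs_nonneg (c * d ^ 2); nlinarith
    set l : ℝ := min 1 (ε / D) with hl
    have hl0 : 0 < l := lt_min one_pos (div_pos hε hDpos)
    have hk := key l hl0 (min_le_left _ _)
    have hlD : l * D ≤ ε := by
      calc l * D ≤ (ε / D) * D :=
            mul_le_mul_of_nonneg_right (min_le_right _ _) hDpos.le
        _ = ε := div_mul_cancel₀ _ hDpos.ne'
    have h5 : c * d ^ 2 + ρ * d ^ 2 ≤ D := by
      have := le_abs_self (c * d ^ 2); rw [hD]; linarith
    nlinarith [mul_nonneg hl0.le (sub_nonneg.mpr h5), hlD, hk]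
  have hiv : ⟪u, v⟫ ≤ -(g * (ρ * d ^ 2)) := by
    rw [hc] at hkey2
    have h7 : -2 * (1 / (2 * g)) * ⟪u, v⟫ = -⟪u, v⟫ / g := by
      field_simp
    rw [h7] at hkey2
    have := (le_div_iff₀ hgpos).mp hkey2
    linarith
  have hinner : ⟪xb - z, v⟫ = d ^ 2 - ⟪u, v⟫ := by
    have hw : xb - z = v - u := by rw [hu, hv]; abel
    rw [hw, inner_sub_left, real_inner_self_eq_norm_sq, ← hd]
  have hCS : ⟪xb - z, v⟫ ≤ ‖xb - z‖ * d := by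
    have h8 := real_inner_le_norm (xb - z) v
    rw [← hd] at h8
    exact h8
  have hfinal : (1 + g * ρ) * d ^ 2 ≤ ‖xb - z‖ * d := by
    linarith [hiv, hCS, hinner]
  have h9 : (1 + g * ρ) * d ≤ ‖xb - z‖ := by
    have h10 : ((1 + g * ρ) * d) * d ≤ ‖xb - z‖ * d := by linarith [hfinal]
    exact le_of_mul_le_mul_right h10 hdpos
  have hmono : (1 + γmin * ρ) * d ≤ (1 + g * ρ) * d :=
    mul_le_mul_of_nonneg_right (by nlinarith) hdnn
  rw [div_mul_eq_mul_div, one_mul, le_div_iff₀ hApos]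
  linarith [h9, hmono]
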